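/- Let m ≥ 4 be even and p ≥ 2m. For every ε > 0, any constant C ≥ 1 satisfying the complex m-homogeneous Hardy–Littlewood inequality on ℓ_p (with exponent 2mp/(mp+p-2m)) satisfies C ≥ (2 + c^q)^(1/q) / (2^(-(m-2)/p)(4+c²)^(1/2)) > 1, where q = 2mp/(mp+p-2m) and c = ((2^((2p+4-2m)/p) - 2^((mp+p-2m)/(mp)))/(1 - 2^(-(2m-4)/p)))^(1/2) + ε. -/

import Mathlib

set_option maxHeartbeats 1000000

open MvPolynomial Finset

noncomputable def expo (m a b : ℕ) : Fin m →₀ ℕ :=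
  Finsupp.equivFunOnFinite.symm (fun i => if (i : ℕ) = 0 then a else if (i : ℕ) = 1 then b else 1)

lemma expo_apply (m a b : ℕ) (i : Fin m) :
    expo m a b i = if (i : ℕ) = 0 then a else if (i : ℕ) = 1 then b else 1 := rfl

noncomputable def testP (m : ℕ) (c : ℝ) : MvPolynomial (Fin m) ℂ :=
  monomial (expo m 2 0) 1 + monomial (expo m 0 2) (-1) + monomial (expo m 1 1) (c : ℂ)

lemma prod_univ_ite {M : Type*} [CommMonoid M] {m : ℕ} (hm : 4 ≤ m) (A B g : Fin m → M) :
    (∏ i : Fin m, if (i : ℕ) = 0 then A i else if (i : ℕ) = 1 then B i else g i) =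
      A ⟨0, by omega⟩ * B ⟨1, by omega⟩ *
        ∏ i ∈ Finset.univ \ {(⟨0, by omega⟩ : Fin m), ⟨1, by omega⟩}, g i := by
  set z0 : Fin m := ⟨0, by omega⟩ with hz0
  set z1 : Fin m := ⟨1, by omega⟩ with hz1
  have hne : z0 ≠ z1 := by simp [hz0, hz1, Fin.ext_iff]
  rw [← Finset.prod_sdiff (Finset.subset_univ ({z0, z1} : Finset (Fin m)))]
  rw [Finset.prod_pair hne]
  have h0 : (if ((z0 : Fin m) : ℕ) = 0 then A z0 else if ((z0 : Fin m) : ℕ) = 1 then B z0 else g z0) = A z0 := by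
    simp [hz0]
  have h1 : (if ((z1 : Fin m) : ℕ) = 0 then A z1 else if ((z1 : Fin m) : ℕ) = 1 then B z1 else g z1) = B z1 := by
    simp [hz1]
  have hg : ∀ i ∈ Finset.univ \ ({z0, z1} : Finset (Fin m)),
      (if (i : ℕ) = 0 then A i else if (i : ℕ) = 1 then B i else g i) = g i := by
    intro i hi
    simp only [Finset.mem_sdiff, Finset.mem_insert, Finset.mem_singleton] at hi
    have hi0 : (i : ℕ) ≠ 0 := fun h => hi.2 (Or.inl (by rw [hz0]; exact Fin.ext h))
    have hi1 : (i : ℕ) ≠ 1 := fun h => hi.2 (Or.inr (by rw [hz1]; exact Fin.ext h))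
    simp [hi0, hi1]
  rw [Finset.prod_congr rfl hg, h0, h1]
  rw [mul_comm]

lemma sum_univ_ite {M : Type*} [AddCommMonoid M] {m : ℕ} (hm : 4 ≤ m) (A B g : Fin m → M) :
    (∑ i : Fin m, if (i : ℕ) = 0 then A i else if (i : ℕ) = 1 then B i else g i) =
      A ⟨0, by omega⟩ + B ⟨1, by omega⟩ +
        ∑ i ∈ Finset.univ \ {(⟨0, by omega⟩ : Fin m), ⟨1, by omega⟩}, g i := by
  set z0 : Fin m := ⟨0, by omega⟩ with hz0
  set z1 : Fin m := ⟨1, by omega⟩ with hz1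
  have hne : z0 ≠ z1 := by simp [hz0, hz1, Fin.ext_iff]
  rw [← Finset.sum_sdiff (Finset.subset_univ ({z0, z1} : Finset (Fin m)))]
  rw [Finset.sum_pair hne]
  have hg : ∀ i ∈ Finset.univ \ ({z0, z1} : Finset (Fin m)),
      (if (i : ℕ) = 0 then A i else if (i : ℕ) = 1 then B i else g i) = g i := by
    intro i hi
    simp only [Finset.mem_sdiff, Finset.mem_insert, Finset.mem_singleton] at hi
    have hi0 : (i : ℕ) ≠ 0 := fun h => hi.2 (Or.inl (by rw [hz0]; exact Fin.ext h))
    have hi1 : (i : ℕ) ≠ 1 := fun h => hi.2 (Or.inr (by rw [hz1]; exact Fin.ext h))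
    simp [hi0, hi1]
  rw [Finset.sum_congr rfl hg]
  have h0 : (if ((z0 : Fin m) : ℕ) = 0 then A z0 else if ((z0 : Fin m) : ℕ) = 1 then B z0 else g z0) = A z0 := by
    simp [hz0]
  have h1 : (if ((z1 : Fin m) : ℕ) = 0 then A z1 else if ((z1 : Fin m) : ℕ) = 1 then B z1 else g z1) = B z1 := by
    simp [hz1]
  rw [h0, h1, add_comm]

lemma card_tail {m : ℕ} (hm : 4 ≤ m) :
    ((Finset.univ : Finset (Fin m)) \ {(⟨0, by omega⟩ : Fin m), ⟨1, by omega⟩}).card = m - 2 := by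
  rw [Finset.card_sdiff_of_subset (Finset.subset_univ _), Finset.card_univ, Fintype.card_fin,
    Finset.card_pair (by simp [Fin.ext_iff])]

lemma expo_degree {m a b : ℕ} (hm : 4 ≤ m) (hab : a + b = 2) : (expo m a b).degree = m := by
  have h1 : (expo m a b).degree = ∑ i : Fin m, expo m a b i := by
    rw [Finsupp.degree]
    exact Finset.sum_subset (Finset.subset_univ _)
      (fun i _ h => Finsupp.notMem_support_iff.mp h)
  rw [h1]
  simp only [expo_apply]
  rw [sum_univ_ite hm (fun _ => a) (fun _ => b) (fun _ => 1), Finset.sum_const, card_tail hm, smul_eq_mul]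
  omega

lemma testP_eval {m : ℕ} (hm : 4 ≤ m) (c : ℝ) (z : Fin m → ℂ) :
    eval z (testP m c) =
      (z ⟨0, by omega⟩ ^ 2 - z ⟨1, by omega⟩ ^ 2 +
        (c : ℂ) * z ⟨0, by omega⟩ * z ⟨1, by omega⟩) *
      ∏ i ∈ (Finset.univ : Finset (Fin m)) \ {(⟨0, by omega⟩ : Fin m), ⟨1, by omega⟩}, z i := by
  have key : ∀ a b : ℕ,
      (∏ i : Fin m, z i ^ (expo m a b i)) =
        z ⟨0, by omega⟩ ^ a * z ⟨1, by omega⟩ ^ b *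
          ∏ i ∈ (Finset.univ : Finset (Fin m)) \ {(⟨0, by omega⟩ : Fin m), ⟨1, by omega⟩}, z i := by
    intro a b
    have h : ∀ i : Fin m, z i ^ (expo m a b i) =
        (if (i : ℕ) = 0 then z i ^ a else if (i : ℕ) = 1 then z i ^ b else z i) := by
      intro i
      rw [expo_apply]
      split_ifs <;> simp [pow_one]
    rw [Finset.prod_congr rfl (fun i _ => h i),
      prod_univ_ite hm (fun i => z i ^ a) (fun i => z i ^ b) (fun i => z i)]
  simp only [testP, map_add, eval_monomial, Finsupp.prod_pow, key, one_mul]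
  ring

lemma quad_sq (c : ℝ) (a b : ℂ) :
    ‖a ^ 2 - b ^ 2 + (c : ℂ) * a * b‖ ^ 2 ≤
      (1 + c ^ 2 / 4) * (‖a‖ ^ 2 + ‖b‖ ^ 2) ^ 2 := by
  have hid : Complex.normSq (a ^ 2 - b ^ 2 + (c : ℂ) * a * b) +
      (2 * (a * (starRingEnd ℂ) b).re - c / 2 * (Complex.normSq a - Complex.normSq b)) ^ 2 =
      (1 + c ^ 2 / 4) * (Complex.normSq a + Complex.normSq b) ^ 2 := by
    simp only [Complex.normSq_apply, Complex.add_re, Complex.add_im, Complex.sub_re,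
      Complex.sub_im, Complex.mul_re, Complex.mul_im, Complex.ofReal_re, Complex.ofReal_im,
      Complex.conj_re, Complex.conj_im, pow_two]
    ring
  have hn : ∀ w : ℂ, ‖w‖ ^ 2 = Complex.normSq w := fun w => by
    rw [Complex.sq_norm]
  rw [hn, hn, hn]
  nlinarith [sq_nonneg (2 * (a * (starRingEnd ℂ) b).re - c / 2 * (Complex.normSq a - Complex.normSq b))]

lemma add_rpow_le' {x y r : ℝ} (hx : 0 ≤ x) (hy : 0 ≤ y) (hr : 1 ≤ r) :
    x ^ r + y ^ r ≤ (x + y) ^ r := by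
  have h := NNReal.add_rpow_le_rpow_add x.toNNReal y.toNNReal hr
  rw [← NNReal.coe_le_coe] at h
  push_cast [NNReal.coe_rpow] at h
  rwa [Real.coe_toNNReal _ hx, Real.coe_toNNReal _ hy] at h

lemma tail_bound {m : ℕ} (hm : 4 ≤ m) {p : ℝ} (hp : 0 < p) (z : Fin m → ℂ)
    (hz : ∑ i, ‖z i‖ ^ p ≤ 1) :
    ∏ i ∈ (Finset.univ : Finset (Fin m)) \ {(⟨0, by omega⟩ : Fin m), ⟨1, by omega⟩}, ‖z i‖ ≤
      (2 : ℝ) ^ (-((m : ℝ) - 2) / p) := by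
  set S := (Finset.univ : Finset (Fin m)) \ {(⟨0, by omega⟩ : Fin m), ⟨1, by omega⟩} with hS
  have hm4 : (4 : ℝ) ≤ (m : ℝ) := by exact_mod_cast hm
  have hm2 : (0 : ℝ) < (m : ℝ) - 2 := by linarith
  have hzn : ∀ i, (0 : ℝ) ≤ ‖z i‖ := fun i => norm_nonneg _
  have hcard : (S.card : ℝ) = (m : ℝ) - 2 := by
    rw [hS, card_tail hm]
    push_cast [Nat.cast_sub (by omega : 2 ≤ m)]
    ring
  have hAM := Real.geom_mean_le_arith_mean_weighted S (fun _ => ((m : ℝ) - 2)⁻¹)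
    (fun i => ‖z i‖ ^ p) (fun i _ => by positivity)
    (by rw [Finset.sum_const, nsmul_eq_mul, hcard]; field_simp)
    (fun i _ => Real.rpow_nonneg (hzn i) p)
  have hL : (∏ i ∈ S, (‖z i‖ ^ p) ^ (((m : ℝ) - 2)⁻¹)) =
      (∏ i ∈ S, ‖z i‖) ^ (p * ((m : ℝ) - 2)⁻¹) := by
    rw [← Real.finset_prod_rpow S _ (fun i _ => hzn i) _]
    exact Finset.prod_congr rfl fun i _ => by rw [← Real.rpow_mul (hzn i)]
  have hR : (∑ i ∈ S, ((m : ℝ) - 2)⁻¹ * ‖z i‖ ^ p) ≤ 2⁻¹ := by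
    rw [← Finset.mul_sum]
    have h1 : ∑ i ∈ S, ‖z i‖ ^ p ≤ 1 :=
      le_trans (Finset.sum_le_sum_of_subset_of_nonneg (Finset.subset_univ S)
        (fun i _ _ => Real.rpow_nonneg (hzn i) p)) hz
    calc ((m : ℝ) - 2)⁻¹ * ∑ i ∈ S, ‖z i‖ ^ p ≤ ((m : ℝ) - 2)⁻¹ * 1 :=
          mul_le_mul_of_nonneg_left h1 (by positivity)
      _ ≤ 2⁻¹ := by
          rw [mul_one]
          exact inv_anti₀ two_pos (by linarith)
  set r : ℝ := p * ((m : ℝ) - 2)⁻¹ with hr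
  have hr0 : 0 < r := by positivity
  have hPn : (0 : ℝ) ≤ ∏ i ∈ S, ‖z i‖ := Finset.prod_nonneg fun i _ => hzn i
  have key : (∏ i ∈ S, ‖z i‖) ^ r ≤ 2⁻¹ := by
    rw [← hL]; exact hAM.trans hR
  have hrec : (∏ i ∈ S, ‖z i‖) = ((∏ i ∈ S, ‖z i‖) ^ r) ^ r⁻¹ := by
    rw [← Real.rpow_mul hPn, mul_inv_cancel₀ hr0.ne', Real.rpow_one]
  rw [hrec]
  calc ((∏ i ∈ S, ‖z i‖) ^ r) ^ r⁻¹ ≤ (2⁻¹ : ℝ) ^ r⁻¹ :=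
      Real.rpow_le_rpow (Real.rpow_nonneg hPn r) key (inv_nonneg.mpr hr0.le)
    _ = (2 : ℝ) ^ (-((m : ℝ) - 2) / p) := by
      rw [Real.inv_rpow (by norm_num), ← Real.rpow_neg (by norm_num)]
      congr 1
      rw [hr]
      field_simp

theorem stmt_14 (m : ℕ) (hm : 4 ≤ m) (hme : Even m) (p : ℝ) (hp : 2 * (m : ℝ) ≤ p)
    (ε : ℝ) (hε : 0 < ε) (q c : ℝ)
    (hq : q = 2 * (m : ℝ) * p / ((m : ℝ) * p + p - 2 * (m : ℝ)))
    (hc : c = (((2 : ℝ) ^ ((2 * p + 4 - 2 * (m : ℝ)) / p) -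
          (2 : ℝ) ^ (((m : ℝ) * p + p - 2 * (m : ℝ)) / ((m : ℝ) * p))) /
        (1 - (2 : ℝ) ^ (-(2 * (m : ℝ) - 4) / p))) ^ ((1 : ℝ) / 2) + ε)
    (C : ℝ) (hC : 1 ≤ C)
    (H : ∀ (n : ℕ) (P : MvPolynomial (Fin n) ℂ), P.IsHomogeneous m →
      (∑ α ∈ P.support, ‖P.coeff α‖ ^ q) ^ (1 / q) ≤
        C * sSup {y : ℝ | ∃ z : Fin n → ℂ, (∑ i, ‖z i‖ ^ p) ≤ 1 ∧
              y = ‖MvPolynomial.eval z P‖}) :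
    (2 + c ^ q) ^ (1 / q) / ((2 : ℝ) ^ (-((m : ℝ) - 2) / p) * Real.sqrt (4 + c ^ 2)) ≤ C ∧
    1 < (2 + c ^ q) ^ (1 / q) / ((2 : ℝ) ^ (-((m : ℝ) - 2) / p) * Real.sqrt (4 + c ^ 2)) := by
  have hm4 : (4 : ℝ) ≤ (m : ℝ) := by exact_mod_cast hm
  have hm0 : (0 : ℝ) < (m : ℝ) := by linarith
  have hp0 : (0 : ℝ) < p := by linarith
  have hD : (0 : ℝ) < (m : ℝ) * p + p - 2 * (m : ℝ) := by nlinarith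
  have hq0 : 0 < q := by rw [hq]; positivity
  have hq2 : q ≤ 2 := by
    rw [hq, div_le_iff₀ hD]; nlinarith
  -- abbreviations
  set a : ℝ := (2 : ℝ) ^ (-((m : ℝ) - 2) / p) with ha
  have ha0 : 0 < a := Real.rpow_pos_of_pos two_pos _
  have ha2 : a ^ 2 = (2 : ℝ) ^ (-(2 * (m : ℝ) - 4) / p) := by
    rw [ha, sq, ← Real.rpow_add two_pos]; congr 1; ring
  have h4a : (2 : ℝ) ^ ((2 * p + 4 - 2 * (m : ℝ)) / p) = 4 * a ^ 2 := by
    rw [ha2, show (2 * p + 4 - 2 * (m : ℝ)) / p = 2 + -(2 * (m : ℝ) - 4) / p by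
      field_simp; ring, Real.rpow_add two_pos,
      show (2 : ℝ) ^ (2 : ℝ) = 4 by
        rw [show (2 : ℝ) = ((2 : ℕ) : ℝ) by norm_num, Real.rpow_natCast]; norm_num]
  have h2q : (2 : ℝ) ^ (((m : ℝ) * p + p - 2 * (m : ℝ)) / ((m : ℝ) * p)) = (2 : ℝ) ^ (2 / q) := by
    congr 1
    rw [hq]
    field_simp
  have hden : 0 < 1 - a ^ 2 := by
    rw [ha2]
    have : (2 : ℝ) ^ (-(2 * (m : ℝ) - 4) / p) < 1 :=
      Real.rpow_lt_one_of_one_lt_of_neg one_lt_two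
        (div_neg_of_neg_of_pos (by linarith) hp0)
    linarith
  have hnum : (2 : ℝ) ^ (2 / q) < 4 * a ^ 2 := by
    rw [← h4a, ← h2q]
    apply Real.rpow_lt_rpow_of_exponent_lt one_lt_two
    rw [div_lt_div_iff₀ (by positivity) hp0]
    nlinarith [mul_nonneg (sub_nonneg.mpr hp) hp0.le]
  set T : ℝ := ((2 : ℝ) ^ ((2 * p + 4 - 2 * (m : ℝ)) / p) -
      (2 : ℝ) ^ (((m : ℝ) * p + p - 2 * (m : ℝ)) / ((m : ℝ) * p))) /
      (1 - (2 : ℝ) ^ (-(2 * (m : ℝ) - 4) / p)) with hT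
  have hTpos : 0 < T := by
    rw [hT, h4a, h2q, ← ha2]
    exact div_pos (by linarith) hden
  have hc0 : 0 < c := by
    rw [hc]
    have := Real.rpow_pos_of_pos hTpos ((1 : ℝ) / 2)
    linarith
  have hcT : T < c ^ 2 := by
    have hs : (T ^ ((1 : ℝ) / 2)) ^ 2 = T := by
      rw [← Real.rpow_natCast (T ^ ((1 : ℝ) / 2)) 2, ← Real.rpow_mul hTpos.le]
      norm_num
    have hlt : T ^ ((1 : ℝ) / 2) < c := by rw [hc]; linarith
    calc T = (T ^ ((1 : ℝ) / 2)) ^ 2 := hs.symm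
      _ < c ^ 2 := by
        apply pow_lt_pow_left₀ hlt (Real.rpow_nonneg hTpos.le _)
        norm_num
  have hTmul : T * (1 - a ^ 2) = 4 * a ^ 2 - (2 : ℝ) ^ (2 / q) := by
    rw [hT, h4a, h2q, ← ha2, div_mul_cancel₀ _ hden.ne']
  have hX0 : 0 < a * Real.sqrt (4 + c ^ 2) := by positivity
  have hZ0 : (0 : ℝ) < 2 + c ^ q := by
    have := Real.rpow_pos_of_pos hc0 q; linarith
  -- squares comparison
  have hsq : (a * Real.sqrt (4 + c ^ 2)) ^ 2 < ((2 + c ^ q) ^ (1 / q)) ^ 2 := by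
    have e1 : (a * Real.sqrt (4 + c ^ 2)) ^ 2 = a ^ 2 * (4 + c ^ 2) := by
      rw [mul_pow, Real.sq_sqrt (by positivity)]
    have e2 : ((2 + c ^ q) ^ (1 / q)) ^ 2 = (2 + c ^ q) ^ (2 / q) := by
      rw [← Real.rpow_natCast ((2 + c ^ q) ^ (1 / q)) 2, ← Real.rpow_mul hZ0.le]
      congr 1
      field_simp
      norm_num
    have hsuper : (2 : ℝ) ^ (2 / q) + c ^ 2 ≤ (2 + c ^ q) ^ (2 / q) := by
      have h := add_rpow_le' (x := 2) (y := c ^ q) (r := 2 / q) (by norm_num)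
        (Real.rpow_nonneg hc0.le q) ((le_div_iff₀ hq0).mpr (by linarith))
      have h2 : (c ^ q) ^ ((2 : ℝ) / q) = c ^ (2 : ℕ) := by
        rw [← Real.rpow_natCast c 2, ← Real.rpow_mul hc0.le]
        congr 1
        push_cast
        field_simp
      rwa [h2] at h
    have hkey : 4 * a ^ 2 - (2 : ℝ) ^ (2 / q) < c ^ 2 * (1 - a ^ 2) := by
      rw [← hTmul]
      exact mul_lt_mul_of_pos_right hcT hden
    rw [e1, e2]
    nlinarith [hsuper, hkey]
  have hZX : a * Real.sqrt (4 + c ^ 2) < (2 + c ^ q) ^ (1 / q) :=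
    lt_of_pow_lt_pow_left₀ 2 (Real.rpow_nonneg hZ0.le _) hsq
  have part1 : (2 + c ^ q) ^ (1 / q) / (a * Real.sqrt (4 + c ^ 2)) ≤ C := by
    have hv0 : ∀ u v : ℕ, expo m u v (⟨0, by omega⟩ : Fin m) = u := fun u v => by
      rw [expo_apply]; norm_num
    have h12 : expo m 2 0 ≠ expo m 0 2 := fun h => by
      have h' := DFunLike.congr_fun h (⟨0, by omega⟩ : Fin m)
      rw [hv0, hv0] at h'; omega
    have h13 : expo m 2 0 ≠ expo m 1 1 := fun h => by
      have h' := DFunLike.congr_fun h (⟨0, by omega⟩ : Fin m)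
      rw [hv0, hv0] at h'; omega
    have h23 : expo m 0 2 ≠ expo m 1 1 := fun h => by
      have h' := DFunLike.congr_fun h (⟨0, by omega⟩ : Fin m)
      rw [hv0, hv0] at h'; omega
    have hhom : (testP m c).IsHomogeneous m :=
      ((isHomogeneous_monomial _ (expo_degree hm (by norm_num))).add
        (isHomogeneous_monomial _ (expo_degree hm (by norm_num)))).add
        (isHomogeneous_monomial _ (expo_degree hm (by norm_num)))
    have hcoe1 : (testP m c).coeff (expo m 2 0) = 1 := by
      rw [testP, MvPolynomial.coeff_add, MvPolynomial.coeff_add,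
        MvPolynomial.coeff_monomial, MvPolynomial.coeff_monomial,
        MvPolynomial.coeff_monomial, if_pos rfl, if_neg h12.symm, if_neg h13.symm]
      ring
    have hcoe2 : (testP m c).coeff (expo m 0 2) = -1 := by
      rw [testP, MvPolynomial.coeff_add, MvPolynomial.coeff_add,
        MvPolynomial.coeff_monomial, MvPolynomial.coeff_monomial,
        MvPolynomial.coeff_monomial, if_pos rfl, if_neg h12, if_neg h23.symm]
      ring
    have hcoe3 : (testP m c).coeff (expo m 1 1) = (c : ℂ) := by
      rw [testP, MvPolynomial.coeff_add, MvPolynomial.coeff_add,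
        MvPolynomial.coeff_monomial, MvPolynomial.coeff_monomial,
        MvPolynomial.coeff_monomial, if_pos rfl, if_neg h13, if_neg h23]
      ring
    have hsum : (∑ α ∈ (testP m c).support, ‖(testP m c).coeff α‖ ^ q) = 2 + c ^ q := by
      have hsub : (testP m c).support ⊆ {expo m 2 0, expo m 0 2, expo m 1 1} := by
        intro α hα
        rw [testP] at hα
        rcases Finset.mem_union.mp (MvPolynomial.support_add hα) with h1 | h1
        · rcases Finset.mem_union.mp (MvPolynomial.support_add h1) with h2 | h2
          · have h3 := MvPolynomial.support_monomial_subset h2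
            simp only [Finset.mem_singleton] at h3
            simp [h3]
          · have h3 := MvPolynomial.support_monomial_subset h2
            simp only [Finset.mem_singleton] at h3
            simp [h3]
        · have h3 := MvPolynomial.support_monomial_subset h1
          simp only [Finset.mem_singleton] at h3
          simp [h3]
      rw [Finset.sum_subset hsub (fun x _ hx => by
        rw [MvPolynomial.notMem_support_iff.mp hx]
        simp [Real.zero_rpow hq0.ne'])]
      rw [show ({expo m 2 0, expo m 0 2, expo m 1 1} : Finset (Fin m →₀ ℕ)) =
          insert (expo m 2 0) (insert (expo m 0 2) {expo m 1 1}) from rfl]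
      rw [Finset.sum_insert (by simp [h12, h13]), Finset.sum_insert (by simp [h23]),
        Finset.sum_singleton, hcoe1, hcoe2, hcoe3]
      rw [norm_one, norm_neg, norm_one, Complex.norm_real, Real.norm_eq_abs,
        abs_of_pos hc0, Real.one_rpow]
      ring
    have hbound : ∀ y ∈ {y : ℝ | ∃ z : Fin m → ℂ, (∑ i, ‖z i‖ ^ p) ≤ 1 ∧
        y = ‖MvPolynomial.eval z (testP m c)‖}, y ≤ a * Real.sqrt (4 + c ^ 2) := by
      rintro y ⟨z, hz, rfl⟩
      have hz1 : ∀ i, ‖z i‖ ≤ 1 := by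
        intro i
        by_contra hgt
        push_neg at hgt
        have h1 : (1 : ℝ) < ‖z i‖ ^ p := by
          rw [Real.one_lt_rpow_iff_of_pos (by linarith)]
          exact Or.inl ⟨hgt, hp0⟩
        have h2 : ‖z i‖ ^ p ≤ ∑ j, ‖z j‖ ^ p :=
          Finset.single_le_sum (fun j _ => Real.rpow_nonneg (norm_nonneg _) p)
            (Finset.mem_univ i)
        linarith
      have htail := tail_bound hm hp0 z hz
      have hquad : ‖z ⟨0, by omega⟩ ^ 2 - z ⟨1, by omega⟩ ^ 2 +
          (c : ℂ) * z ⟨0, by omega⟩ * z ⟨1, by omega⟩‖ ≤ Real.sqrt (4 + c ^ 2) := by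
        have h2 := quad_sq c (z ⟨0, by omega⟩) (z ⟨1, by omega⟩)
        have hK0 := hz1 (⟨0, by omega⟩ : Fin m)
        have hK1 := hz1 (⟨1, by omega⟩ : Fin m)
        have hn0 := norm_nonneg (z (⟨0, by omega⟩ : Fin m))
        have hn1 := norm_nonneg (z (⟨1, by omega⟩ : Fin m))
        have hss : (‖z (⟨0, by omega⟩ : Fin m)‖ ^ 2 + ‖z (⟨1, by omega⟩ : Fin m)‖ ^ 2) ^ 2 ≤ 4 := by
          have h0sq : ‖z (⟨0, by omega⟩ : Fin m)‖ ^ 2 ≤ 1 := pow_le_one₀ hn0 hK0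
          have h1sq : ‖z (⟨1, by omega⟩ : Fin m)‖ ^ 2 ≤ 1 := pow_le_one₀ hn1 hK1
          nlinarith [sq_nonneg (‖z (⟨0, by omega⟩ : Fin m)‖ ^ 2 + ‖z (⟨1, by omega⟩ : Fin m)‖ ^ 2)]
        apply Real.le_sqrt_of_sq_le
        nlinarith [mul_nonneg (sq_nonneg c) (sub_nonneg.mpr hss)]
      have hpn : (0 : ℝ) ≤ ∏ i ∈ (Finset.univ : Finset (Fin m)) \
          {(⟨0, by omega⟩ : Fin m), ⟨1, by omega⟩}, ‖z i‖ :=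
        Finset.prod_nonneg fun i _ => norm_nonneg _
      rw [testP_eval hm c z, norm_mul, norm_prod]
      calc _ ≤ Real.sqrt (4 + c ^ 2) * ((2 : ℝ) ^ (-((m : ℝ) - 2) / p)) :=
            mul_le_mul hquad htail hpn (Real.sqrt_nonneg _)
        _ = a * Real.sqrt (4 + c ^ 2) := by rw [ha]; ring
    have hsup : sSup {y : ℝ | ∃ z : Fin m → ℂ, (∑ i, ‖z i‖ ^ p) ≤ 1 ∧
        y = ‖MvPolynomial.eval z (testP m c)‖} ≤ a * Real.sqrt (4 + c ^ 2) :=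
      Real.sSup_le hbound hX0.le
    have hH := H m (testP m c) hhom
    rw [hsum] at hH
    have hfin : (2 + c ^ q) ^ (1 / q) ≤ C * (a * Real.sqrt (4 + c ^ 2)) :=
      hH.trans (mul_le_mul_of_nonneg_left hsup (by linarith))
    exact (div_le_iff₀ hX0).mpr hfin
  exact ⟨part1, (one_lt_div hX0).mpr hZX⟩
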